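/- arXiv:2407.17836 — 5 statements merged into one kernel-verified Lean document; each statement's English description precedes it below -/
import Mathlib

section
/- Let (p, l) be an affine realization of an incidence geometry (P, L, I). If every infinitesimal motion of (p, l) is trivial (i.e., (p, l) is projectively infinitesimally rigid), then (p, l) is projectively rigid: there is a neighborhood U of (p, l) in (ℝ²)^P × (ℝ²)^L such that for every affine realization (p', l') of (P, L, I) lying in U, the homogenizations (p̂', l̂') and (p̂, l̂) are projectively equivalent. -/
open Matrix Topology

/-- Homogenization: `(v₁, v₂) ↦ (v₁, v₂, 1)`. -/
def hat (v : Fin 2 → ℝ) : Fin 3 → ℝ := Fin.snoc v 1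

/-- An affine realization of the incidence geometry `(P, L, I)`:
`l j ⬝ p i + 1 = 0` for every incidence `(i, j)`. -/
def IsAffRealization {P L : Type*} (I : Set (P × L))
    (p : P → Fin 2 → ℝ) (l : L → Fin 2 → ℝ) : Prop :=
  ∀ ij ∈ I, l ij.2 ⬝ᵥ p ij.1 + 1 = 0

/-- An infinitesimal motion of `(p, l)`: an element of the kernel of the projective
rigidity matrix, i.e. `p i ⬝ l̇ j + l j ⬝ ṗ i = 0` for every incidence `(i, j)`. -/
def IsInfMotion {P L : Type*} (I : Set (P × L))
    (p : P → Fin 2 → ℝ) (l : L → Fin 2 → ℝ)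
    (dp : P → Fin 2 → ℝ) (dl : L → Fin 2 → ℝ) : Prop :=
  ∀ ij ∈ I, p ij.1 ⬝ᵥ dl ij.2 + l ij.2 ⬝ᵥ dp ij.1 = 0

/-- A trivial infinitesimal motion: the linearization of a projective transformation,
given by a `3 × 3` matrix `X`. -/
def IsTrivMotion {P L : Type*}
    (p : P → Fin 2 → ℝ) (l : L → Fin 2 → ℝ)
    (dp : P → Fin 2 → ℝ) (dl : L → Fin 2 → ℝ) : Prop :=
  ∃ X : Matrix (Fin 3) (Fin 3) ℝ,
    (∀ i, dp i = Fin.init (X *ᵥ hat (p i)) - (X *ᵥ hat (p i)) 2 • p i) ∧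
    (∀ j, dl j = -(Fin.init (Xᵀ *ᵥ hat (l j))) + (Xᵀ *ᵥ hat (l j)) 2 • l j)

/-- Projective equivalence of two collections of homogeneous coordinates. -/
def ProjEquiv {P L : Type*} (p : P → Fin 3 → ℝ) (l : L → Fin 3 → ℝ)
    (p' : P → Fin 3 → ℝ) (l' : L → Fin 3 → ℝ) : Prop :=
  ∃ (A : GL (Fin 3) ℝ) (lam : P → ℝ) (mu : L → ℝ),
    (∀ i, lam i ≠ 0) ∧ (∀ j, mu j ≠ 0) ∧
    (∀ i, p' i = lam i • ((A : Matrix (Fin 3) (Fin 3) ℝ) *ᵥ p i)) ∧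
    (∀ j, l' j = mu j • (((A⁻¹ : GL (Fin 3) ℝ) : Matrix (Fin 3) (Fin 3) ℝ)ᵀ *ᵥ l j))


noncomputable section PRAux


attribute [local instance] Matrix.linftyOpNormedRing Matrix.linftyOpNormedAlgebra

abbrev M3 : Type := Matrix (Fin 3) (Fin 3) ℝ
instance (priority := high) M3uniform : UniformSpace M3 := PseudoMetricSpace.toUniformSpace
instance (priority := high) M3topology : TopologicalSpace M3 := UniformSpace.toTopologicalSpace
abbrev Cfg (P L : Type*) : Type _ := (P → Fin 2 → ℝ) × (L → Fin 2 → ℝ)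

@[simp] lemma snoc_two (v : Fin 2 → ℝ) (c : ℝ) : (Fin.snoc v c : Fin 3 → ℝ) 2 = c := by
  show (Fin.snoc v c : Fin 3 → ℝ) (Fin.last 2) = c
  rw [Fin.snoc_last]

@[simp] lemma hat_castSucc (v : Fin 2 → ℝ) (k : Fin 2) : hat v k.castSucc = v k := by
  simp [hat]

@[simp] lemma hat_last (v : Fin 2 → ℝ) : hat v 2 = 1 := by
  simp [hat]

lemma dot3 (u : Fin 3 → ℝ) (w : Fin 3 → ℝ) :
    u ⬝ᵥ w = Fin.init u ⬝ᵥ Fin.init w + u 2 * w 2 := by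
  show _ = _ + u (Fin.last 2) * w (Fin.last 2)
  simp [dotProduct, Fin.sum_univ_castSucc, Fin.init]

lemma dot_hat (u : Fin 3 → ℝ) (v : Fin 2 → ℝ) :
    u ⬝ᵥ hat v = Fin.init u ⬝ᵥ v + u 2 := by
  rw [dot3]; simp [hat, Fin.init_snoc]

lemma hat_dot (v : Fin 2 → ℝ) (u : Fin 3 → ℝ) :
    hat v ⬝ᵥ u = v ⬝ᵥ Fin.init u + u 2 := by
  rw [dot3]; simp [hat, Fin.init_snoc]

lemma dot_mulVec_eq (u w : Fin 3 → ℝ) (A : M3) : u ⬝ᵥ (A *ᵥ w) = (Aᵀ *ᵥ u) ⬝ᵥ w := by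
  rw [Matrix.mulVec_transpose, Matrix.dotProduct_mulVec]

def mvL (v : Fin 3 → ℝ) (s : Fin 3) : M3 →ₗ[ℝ] ℝ where
  toFun X := (X *ᵥ v) s
  map_add' X Y := by simp [Matrix.add_mulVec]
  map_smul' c X := by simp [Matrix.smul_mulVec]

@[simp] lemma mvL_apply (v : Fin 3 → ℝ) (s : Fin 3) (X : M3) : mvL v s X = (X *ᵥ v) s := rfl

def tmvL (v : Fin 3 → ℝ) (s : Fin 3) : M3 →ₗ[ℝ] ℝ where
  toFun X := (Xᵀ *ᵥ v) s
  map_add' X Y := by simp [Matrix.transpose_add, Matrix.add_mulVec]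
  map_smul' c X := by simp [Matrix.transpose_smul, Matrix.smul_mulVec]

@[simp] lemma tmvL_apply (v : Fin 3 → ℝ) (s : Fin 3) (X : M3) : tmvL v s X = (Xᵀ *ᵥ v) s := rfl

variable {P L : Type*}

/-- The linear map of trivial motions. -/
def trivL (p : P → Fin 2 → ℝ) (l : L → Fin 2 → ℝ) : M3 →ₗ[ℝ] Cfg P L where
  toFun X := (fun i => Fin.init (X *ᵥ hat (p i)) - (X *ᵥ hat (p i)) 2 • p i,
              fun j => -(Fin.init (Xᵀ *ᵥ hat (l j))) + (Xᵀ *ᵥ hat (l j)) 2 • l j)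
  map_add' X Y := by
    refine Prod.ext (funext fun i => funext fun k => ?_) (funext fun j => funext fun k => ?_) <;>
      simp [Matrix.add_mulVec, Matrix.transpose_add, Fin.init] <;> ring
  map_smul' c X := by
    refine Prod.ext (funext fun i => funext fun k => ?_) (funext fun j => funext fun k => ?_) <;>
      simp [Matrix.smul_mulVec, Matrix.transpose_smul, Fin.init] <;> ring

lemma trivL_apply (p : P → Fin 2 → ℝ) (l : L → Fin 2 → ℝ) (X : M3) :
    trivL p l X = (fun i => Fin.init (X *ᵥ hat (p i)) - (X *ᵥ hat (p i)) 2 • p i,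
              fun j => -(Fin.init (Xᵀ *ᵥ hat (l j))) + (Xᵀ *ᵥ hat (l j)) 2 • l j) := rfl

/-- The action of a matrix on points. -/
def ptAct (p : P → Fin 2 → ℝ) (g : M3) (i : P) : Fin 2 → ℝ :=
  ((g *ᵥ hat (p i)) 2)⁻¹ • Fin.init (g *ᵥ hat (p i))

def lnAct (l : L → Fin 2 → ℝ) (g : M3) (j : L) : Fin 2 → ℝ :=
  (((Ring.inverse g)ᵀ *ᵥ hat (l j)) 2)⁻¹ • Fin.init ((Ring.inverse g)ᵀ *ᵥ hat (l j))

def act (p : P → Fin 2 → ℝ) (l : L → Fin 2 → ℝ) (g : M3) : Cfg P L := (ptAct p g, lnAct l g)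

lemma act_one (p : P → Fin 2 → ℝ) (l : L → Fin 2 → ℝ) : act p l 1 = (p, l) := by
  unfold act ptAct lnAct
  refine Prod.ext (funext fun i => ?_) (funext fun j => ?_) <;>
    simp [Matrix.one_mulVec, hat, Fin.init_snoc]

/-- The realization equations, as a map to `P × L → ℝ`. -/
def Fmap (I : Set (P × L)) (q : Cfg P L) : P × L → ℝ :=
  I.indicator fun ij => q.2 ij.2 ⬝ᵥ q.1 ij.1 + 1

lemma Fmap_eq_zero (I : Set (P × L)) (q : Cfg P L) (h : IsAffRealization I q.1 q.2) :
    Fmap I q = 0 := by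
  funext ij
  by_cases hij : ij ∈ I
  · simpa [Fmap, Set.indicator_of_mem hij] using h ij hij
  · simp [Fmap, Set.indicator_of_notMem hij]

/-- The differential of `Fmap` at `(p, l)`. -/
def dF (I : Set (P × L)) (p : P → Fin 2 → ℝ) (l : L → Fin 2 → ℝ) :
    Cfg P L →ₗ[ℝ] (P × L → ℝ) where
  toFun d := I.indicator fun ij => p ij.1 ⬝ᵥ d.2 ij.2 + l ij.2 ⬝ᵥ d.1 ij.1
  map_add' d e := by
    funext ij
    by_cases h : ij ∈ I <;>
      simp [Set.indicator_of_mem, Set.indicator_of_notMem, h, dotProduct_add] <;> ring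
  map_smul' c d := by
    funext ij
    by_cases h : ij ∈ I <;>
      simp [Set.indicator_of_mem, Set.indicator_of_notMem, h, dotProduct_smul, smul_eq_mul] <;>
      ring

lemma dF_eq_zero_iff (I : Set (P × L)) (p : P → Fin 2 → ℝ) (l : L → Fin 2 → ℝ) (d : Cfg P L) :
    dF I p l d = 0 ↔ IsInfMotion I p l d.1 d.2 := by
  constructor
  · intro h ij hij
    have := congrFun h ij
    simpa [dF, Set.indicator_of_mem hij] using this
  · intro h
    funext ij
    by_cases hij : ij ∈ I
    · simpa [dF, Set.indicator_of_mem hij] using h ij hij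
    · simp [dF, Set.indicator_of_notMem hij]

lemma dF_trivL (I : Set (P × L)) (p : P → Fin 2 → ℝ) (l : L → Fin 2 → ℝ)
    (hreal : IsAffRealization I p l) (X : M3) : dF I p l (trivL p l X) = 0 := by
  funext ij
  by_cases hij : ij ∈ I
  · obtain ⟨i, j⟩ := ij
    have hp : l j ⬝ᵥ p i + 1 = 0 := hreal (i, j) hij
    have key : hat (l j) ⬝ᵥ (X *ᵥ hat (p i)) = (Xᵀ *ᵥ hat (l j)) ⬝ᵥ hat (p i) :=
      dot_mulVec_eq _ _ _
    rw [hat_dot, dot_hat] at key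
    simp only [dF, LinearMap.coe_mk, AddHom.coe_mk, Set.indicator_of_mem hij, trivL_apply,
      dotProduct_add, dotProduct_sub, dotProduct_neg, dotProduct_smul, sub_dotProduct,
      add_dotProduct, neg_dotProduct, smul_eq_mul, smul_dotProduct, Pi.zero_apply]
    have hcomm : p i ⬝ᵥ l j = l j ⬝ᵥ p i := dotProduct_comm _ _
    have hcomm2 : p i ⬝ᵥ Fin.init (Xᵀ *ᵥ hat (l j)) = Fin.init (Xᵀ *ᵥ hat (l j)) ⬝ᵥ p i :=
      dotProduct_comm _ _
    linear_combination key + ((Xᵀ *ᵥ hat (l j)) 2 - (X *ᵥ hat (p i)) 2) * hp +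
      (Xᵀ *ᵥ hat (l j)) 2 * hcomm - hcomm2
  · simp [dF, Set.indicator_of_notMem hij]

lemma act_isReal (I : Set (P × L)) (p : P → Fin 2 → ℝ) (l : L → Fin 2 → ℝ)
    (hreal : IsAffRealization I p l) (g : M3) (hg : IsUnit g)
    (hdp : ∀ i, (g *ᵥ hat (p i)) 2 ≠ 0)
    (hdl : ∀ j, ((Ring.inverse g)ᵀ *ᵥ hat (l j)) 2 ≠ 0) :
    IsAffRealization I (act p l g).1 (act p l g).2 := by
  intro ij hij
  obtain ⟨i, j⟩ := ij
  set u := (Ring.inverse g)ᵀ *ᵥ hat (l j) with hu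
  set w := g *ᵥ hat (p i) with hw
  have key : u ⬝ᵥ w = 0 := by
    rw [hw, dot_mulVec_eq, hu, Matrix.mulVec_mulVec, ← Matrix.transpose_mul,
      Ring.inverse_mul_cancel _ hg, Matrix.transpose_one, Matrix.one_mulVec, hat_dot]
    simpa [Fin.init_snoc, hat] using hreal (i, j) hij
  have expand : Fin.init u ⬝ᵥ Fin.init w = -(u 2 * w 2) := by
    have := dot3 u w
    rw [key] at this
    linarith
  show (u 2)⁻¹ • Fin.init u ⬝ᵥ ((w 2)⁻¹ • Fin.init w) + 1 = 0
  rw [dotProduct_smul, smul_dotProduct, expand]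
  field_simp [hdp i, hdl j]
  have hmain : (1 / w 2) * ((1 / u 2) * -(w 2 * u 2)) = -1 := by
    field_simp [show u 2 ≠ 0 from hdl j, show w 2 ≠ 0 from hdp i]
  simp only [smul_eq_mul, hmain]; ring

section Calc

variable [Fintype P] [Fintype L]

def mvC (v : Fin 3 → ℝ) (s : Fin 3) : M3 →L[ℝ] ℝ := (mvL v s).toContinuousLinearMap
def tmvC (v : Fin 3 → ℝ) (s : Fin 3) : M3 →L[ℝ] ℝ := (tmvL v s).toContinuousLinearMap

@[simp] lemma mvC_apply (v : Fin 3 → ℝ) (s : Fin 3) (X : M3) : mvC v s X = (X *ᵥ v) s := rfl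
@[simp] lemma tmvC_apply (v : Fin 3 → ℝ) (s : Fin 3) (X : M3) : tmvC v s X = (Xᵀ *ᵥ v) s := rfl

def trivC (p : P → Fin 2 → ℝ) (l : L → Fin 2 → ℝ) : M3 →L[ℝ] Cfg P L :=
  (trivL p l).toContinuousLinearMap

@[simp] lemma trivC_apply (p : P → Fin 2 → ℝ) (l : L → Fin 2 → ℝ) (X : M3) :
    trivC p l X = trivL p l X := rfl

def dFC (I : Set (P × L)) (p : P → Fin 2 → ℝ) (l : L → Fin 2 → ℝ) :
    Cfg P L →L[ℝ] (P × L → ℝ) := (dF I p l).toContinuousLinearMap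

@[simp] lemma dFC_apply (I : Set (P × L)) (p : P → Fin 2 → ℝ) (l : L → Fin 2 → ℝ) (d : Cfg P L) :
    dFC I p l d = dF I p l d := rfl

/-- generic scalar quotient derivative lemma -/
lemma scalar_quot_hasFDerivAt {w : M3 → Fin 3 → ℝ} {W : Fin 3 → (M3 →L[ℝ] ℝ)} {v : Fin 3 → ℝ}
    (hw : ∀ s, HasFDerivAt (fun g => w g s) (W s) 1) (hval : w 1 = v) (hv : v 2 = 1)
    (k : Fin 2) :
    HasFDerivAt (fun g : M3 => (w g 2)⁻¹ * w g k.castSucc)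
      (W k.castSucc - v k.castSucc • W 2) 1 := by
  have h1 : w 1 2 = 1 := by rw [hval]; exact hv
  have hinv : HasFDerivAt (fun g : M3 => (w g 2)⁻¹) ((-((1:ℝ) ^ 2)⁻¹) • W 2) 1 :=
    (hasDerivAt_inv one_ne_zero).comp_hasFDerivAt_of_eq 1 (hw 2) h1.symm
  have hmul := hinv.mul (hw k.castSucc)
  refine hmul.congr_fderiv ?_
  ext X
  simp only [ContinuousLinearMap.coe_sub', Pi.sub_apply, ContinuousLinearMap.coe_smul',
    Pi.smul_apply, smul_eq_mul, ContinuousLinearMap.add_apply, h1, hval, hv]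
  ring

lemma ptAct_scalar_hasFDerivAt (p : P → Fin 2 → ℝ) (i : P) (k : Fin 2) :
    HasFDerivAt (fun g : M3 => ptAct p g i k)
      (mvC (hat (p i)) k.castSucc - p i k • mvC (hat (p i)) 2) 1 := by
  have := scalar_quot_hasFDerivAt (w := fun g => g *ᵥ hat (p i)) (W := fun s => mvC (hat (p i)) s)
    (v := hat (p i)) (fun s => (mvC (hat (p i)) s).hasFDerivAt)
    (by funext s; simp [Matrix.one_mulVec]) (hat_last _) k
  simpa [ptAct, Fin.init] using this

lemma hasFDerivAt_ringInverse_one : HasFDerivAt (Ring.inverse : M3 → M3)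
    (-(ContinuousLinearMap.mulLeftRight ℝ M3 1 1)) 1 := by
  simpa using hasFDerivAt_ringInverse (𝕜 := ℝ) (1 : M3ˣ)

lemma lnAct_u_hasFDerivAt (v : Fin 3 → ℝ) (s : Fin 3) :
    HasFDerivAt (fun g : M3 => ((Ring.inverse g)ᵀ *ᵥ v) s) (-(tmvC v s)) 1 := by
  have h := ((tmvC v s).hasFDerivAt (x := Ring.inverse (1 : M3))).comp (1 : M3)
    hasFDerivAt_ringInverse_one
  refine h.congr_fderiv ?_
  ext X
  simp [ContinuousLinearMap.mulLeftRight_apply]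

lemma lnAct_scalar_hasFDerivAt (l : L → Fin 2 → ℝ) (j : L) (k : Fin 2) :
    HasFDerivAt (fun g : M3 => lnAct l g j k)
      (-(tmvC (hat (l j)) k.castSucc) + (hat (l j)) k.castSucc • tmvC (hat (l j)) 2) 1 := by
  have := scalar_quot_hasFDerivAt (w := fun g => (Ring.inverse g)ᵀ *ᵥ hat (l j))
    (W := fun s => -(tmvC (hat (l j)) s)) (v := hat (l j))
    (fun s => lnAct_u_hasFDerivAt (hat (l j)) s)
    (by funext s; simp [Matrix.one_mulVec]) (hat_last _) k
  have heq : -(tmvC (hat (l j)) k.castSucc) + (hat (l j)) k.castSucc • tmvC (hat (l j)) 2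
      = -(tmvC (hat (l j)) k.castSucc) - (hat (l j)) k.castSucc • (-(tmvC (hat (l j)) 2)) := by
    ext X; simp; try ring
  rw [heq]
  simpa [lnAct, Fin.init] using this

lemma act_hasFDerivAt (p : P → Fin 2 → ℝ) (l : L → Fin 2 → ℝ) :
    HasFDerivAt (act p l) (trivC p l) 1 := by
  have hpt : HasFDerivAt (fun g : M3 => ptAct p g)
      (ContinuousLinearMap.pi fun i => ContinuousLinearMap.pi fun k : Fin 2 =>
        mvC (hat (p i)) k.castSucc - p i k • mvC (hat (p i)) 2) 1 :=
    hasFDerivAt_pi.2 fun i => hasFDerivAt_pi.2 fun k => ptAct_scalar_hasFDerivAt p i k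
  have hln : HasFDerivAt (fun g : M3 => lnAct l g)
      (ContinuousLinearMap.pi fun j => ContinuousLinearMap.pi fun k : Fin 2 =>
        -(tmvC (hat (l j)) k.castSucc) + (hat (l j)) k.castSucc • tmvC (hat (l j)) 2) 1 :=
    hasFDerivAt_pi.2 fun j => hasFDerivAt_pi.2 fun k => lnAct_scalar_hasFDerivAt l j k
  have h := hpt.prodMk hln
  refine h.congr_fderiv ?_
  ext X
  all_goals (simp [trivL_apply, Fin.init]; ring)

lemma act_contDiffAt (p : P → Fin 2 → ℝ) (l : L → Fin 2 → ℝ) :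
    ContDiffAt ℝ 1 (act p l) 1 := by
  haveI : CompleteSpace M3 := FiniteDimensional.complete ℝ M3
  have hpt : ContDiffAt ℝ 1 (fun g : M3 => ptAct p g) 1 := by
    refine contDiffAt_pi.2 fun i => contDiffAt_pi.2 fun k => ?_
    have h2 : ContDiffAt ℝ 1 (fun g : M3 => ((g *ᵥ hat (p i)) 2)⁻¹) 1 :=
      ((mvC (hat (p i)) 2).contDiff.contDiffAt).inv (by simp [Matrix.one_mulVec])
    exact h2.mul ((mvC (hat (p i)) k.castSucc).contDiff.contDiffAt)
  have hln : ContDiffAt ℝ 1 (fun g : M3 => lnAct l g) 1 := by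
    refine contDiffAt_pi.2 fun j => contDiffAt_pi.2 fun k => ?_
    have hR : ContDiffAt ℝ 1 (Ring.inverse : M3 → M3) 1 := by
      simpa using contDiffAt_ringInverse ℝ (n := 1) (1 : M3ˣ)
    have hu : ∀ s, ContDiffAt ℝ 1 (fun g : M3 => ((Ring.inverse g)ᵀ *ᵥ hat (l j)) s) 1 :=
      fun s => ((tmvC (hat (l j)) s).contDiff.contDiffAt).comp 1 hR
    have h2 : ContDiffAt ℝ 1 (fun g : M3 => (((Ring.inverse g)ᵀ *ᵥ hat (l j)) 2)⁻¹) 1 :=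
      (hu 2).inv (by simp [Matrix.one_mulVec])
    exact h2.mul (hu k.castSucc)
  exact hpt.prodMk hln

lemma act_hasStrictFDerivAt (p : P → Fin 2 → ℝ) (l : L → Fin 2 → ℝ) :
    HasStrictFDerivAt (act p l) (trivC p l) 1 :=
  (act_contDiffAt p l).hasStrictFDerivAt' (act_hasFDerivAt p l) one_ne_zero

lemma dF_apply (I : Set (P × L)) (p : P → Fin 2 → ℝ) (l : L → Fin 2 → ℝ) (d : Cfg P L) :
    dF I p l d = I.indicator fun ij => p ij.1 ⬝ᵥ d.2 ij.2 + l ij.2 ⬝ᵥ d.1 ij.1 := rfl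

def ev1L (i : P) (k : Fin 2) : Cfg P L →ₗ[ℝ] ℝ where
  toFun q := q.1 i k
  map_add' _ _ := rfl
  map_smul' _ _ := rfl

def ev2L (j : L) (k : Fin 2) : Cfg P L →ₗ[ℝ] ℝ where
  toFun q := q.2 j k
  map_add' _ _ := rfl
  map_smul' _ _ := rfl

def ev1 (i : P) (k : Fin 2) : Cfg P L →L[ℝ] ℝ := (ev1L i k).toContinuousLinearMap

def ev2 (j : L) (k : Fin 2) : Cfg P L →L[ℝ] ℝ := (ev2L j k).toContinuousLinearMap

@[simp] lemma ev1_apply (i : P) (k : Fin 2) (q : Cfg P L) : ev1 i k q = q.1 i k := rfl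
@[simp] lemma ev2_apply (j : L) (k : Fin 2) (q : Cfg P L) : ev2 j k q = q.2 j k := rfl

lemma Fmap_hasFDerivAt (I : Set (P × L)) (p : P → Fin 2 → ℝ) (l : L → Fin 2 → ℝ) :
    HasFDerivAt (Fmap I) (dFC I p l) (p, l) := by
  apply hasFDerivAt_pi'.2
  intro ij
  by_cases hij : ij ∈ I
  · have hfun : (fun q : Cfg P L => Fmap I q ij)
        = fun q => (∑ k, q.2 ij.2 k * q.1 ij.1 k) + 1 := by
      funext q; simp [Fmap, Set.indicator_of_mem hij, dotProduct]
    rw [hfun]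
    have hsum : HasFDerivAt (fun q : Cfg P L => (∑ k, q.2 ij.2 k * q.1 ij.1 k))
        (∑ k, (l ij.2 k • ev1 ij.1 k + p ij.1 k • ev2 ij.2 k)) (p, l) := by
      refine HasFDerivAt.fun_sum fun k _ => ?_
      have h1 : HasFDerivAt (fun q : Cfg P L => q.2 ij.2 k) (ev2 ij.2 k) (p, l) :=
        @ContinuousLinearMap.hasFDerivAt ℝ _ (Cfg P L) _ _ _ ℝ _ _ _ (ev2 ij.2 k) (p, l)
      have h2 : HasFDerivAt (fun q : Cfg P L => q.1 ij.1 k) (ev1 ij.1 k) (p, l) :=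
        @ContinuousLinearMap.hasFDerivAt ℝ _ (Cfg P L) _ _ _ ℝ _ _ _ (ev1 ij.1 k) (p, l)
      exact h1.mul h2
    have h := hsum.add_const 1
    convert h using 1
    refine ContinuousLinearMap.ext fun d => ?_
    simp only [ContinuousLinearMap.coe_comp', Function.comp_apply, dFC_apply, dF_apply,
      Set.indicator_of_mem hij, ContinuousLinearMap.proj_apply, ContinuousLinearMap.coe_sum',
      Finset.sum_apply, ContinuousLinearMap.add_apply, ContinuousLinearMap.coe_smul',
      Pi.smul_apply, ev1_apply, ev2_apply, smul_eq_mul]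
    rw [dotProduct, dotProduct, ← Finset.sum_add_distrib]
    exact Finset.sum_congr rfl fun k _ => by ring
  · have hfun : (fun q : Cfg P L => Fmap I q ij) = fun _ => 0 := by
      funext q; simp [Fmap, Set.indicator_of_notMem hij]
    rw [hfun]
    have hz : ((ContinuousLinearMap.proj ij).comp (dFC I p l) : Cfg P L →L[ℝ] ℝ) = 0 := by
      refine ContinuousLinearMap.ext fun d => ?_
      simp [dF_apply, Set.indicator_of_notMem hij]
    rw [hz]
    exact hasFDerivAt_const 0 _

lemma Fmap_contDiff (I : Set (P × L)) : ContDiff ℝ 1 (Fmap I : Cfg P L → P × L → ℝ) := by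
  apply contDiff_pi.2
  intro ij
  by_cases hij : ij ∈ I
  · have hfun : (fun q : Cfg P L => Fmap I q ij)
        = fun q => (∑ k, q.2 ij.2 k * q.1 ij.1 k) + 1 := by
      funext q; simp [Fmap, Set.indicator_of_mem hij, dotProduct]
    rw [hfun]
    exact (ContDiff.sum fun k _ => ((ev2 (P := P) ij.2 k).contDiff.mul (ev1 (L := L) ij.1 k).contDiff)).add
      contDiff_const
  · have hfun : (fun q : Cfg P L => Fmap I q ij) = fun _ => 0 := by
      funext q; simp [Fmap, Set.indicator_of_notMem hij]
    rw [hfun]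
    exact contDiff_const

lemma Fmap_hasStrictFDerivAt (I : Set (P × L)) (p : P → Fin 2 → ℝ) (l : L → Fin 2 → ℝ) :
    HasStrictFDerivAt (Fmap I) (dFC I p l) (p, l) :=
  (Fmap_contDiff I).contDiffAt.hasStrictFDerivAt' (Fmap_hasFDerivAt I p l) one_ne_zero

end Calc

end PRAux

section Main

attribute [local instance] Matrix.linftyOpNormedRing Matrix.linftyOpNormedAlgebra

open Filter

set_option maxHeartbeats 2000000 in
/-- Theorem: if every infinitesimal motion of the affine realization `(p, l)` is
trivial (projective infinitesimal rigidity), then `(p, l)` is projectively rigid: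
in some neighborhood of `(p, l)` in `(ℝ²)^P × (ℝ²)^L`, every affine realization of
`(P, L, I)` has homogenization projectively equivalent to that of `(p, l)`. -/
theorem infRigid_implies_projRigid
    {P L : Type*} [Fintype P] [Fintype L] (I : Set (P × L))
    (p : P → Fin 2 → ℝ) (l : L → Fin 2 → ℝ)
    (hreal : IsAffRealization I p l)
    (hinf : ∀ dp dl, IsInfMotion I p l dp dl → IsTrivMotion p l dp dl) :
    ∃ U ∈ 𝓝 ((p, l) : (P → Fin 2 → ℝ) × (L → Fin 2 → ℝ)),
      ∀ q ∈ U, IsAffRealization I q.1 q.2 →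
        ProjEquiv (fun i => hat (p i)) (fun j => hat (l j))
          (fun i => hat (q.1 i)) (fun j => hat (q.2 j)) := by
  classical
  haveI : CompleteSpace M3 := FiniteDimensional.complete ℝ M3
  obtain ⟨S, hS⟩ := Submodule.exists_isCompl (LinearMap.ker (trivL p l))
  obtain ⟨W, hW⟩ := Submodule.exists_isCompl (LinearMap.range (trivL p l))
  haveI : CompleteSpace S := FiniteDimensional.complete ℝ S
  haveI : CompleteSpace W := FiniteDimensional.complete ℝ W
  haveI : CompleteSpace (S × W) := inferInstance
  -- the linear equivalence (S × W) ≃ Cfg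
  set e₀ : (S × W) →ₗ[ℝ] Cfg P L :=
    LinearMap.coprod ((trivL p l).comp S.subtype) W.subtype with he₀
  have he₀_apply : ∀ z : S × W, e₀ z = trivL p l (z.1 : M3) + (z.2 : Cfg P L) :=
    fun z => rfl
  have hinj : Function.Injective e₀ := by
    rw [← LinearMap.ker_eq_bot]
    rw [Submodule.eq_bot_iff]
    rintro ⟨z1, z2⟩ hz
    rw [LinearMap.mem_ker, he₀_apply] at hz
    have h1 : trivL p l (z1 : M3) = -(z2 : Cfg P L) := eq_neg_of_add_eq_zero_left hz
    have h2 : trivL p l (z1 : M3) ∈ LinearMap.range (trivL p l) ⊓ W := by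
      refine ⟨LinearMap.mem_range_self _ _, ?_⟩
      rw [h1]; exact W.neg_mem z2.2
    rw [hW.inf_eq_bot, Submodule.mem_bot] at h2
    have h3 : (z2 : Cfg P L) = 0 := by
      rw [h2] at h1
      simpa using h1.symm
    have h4 : (z1 : M3) ∈ LinearMap.ker (trivL p l) ⊓ S := ⟨LinearMap.mem_ker.2 h2, z1.2⟩
    rw [hS.inf_eq_bot, Submodule.mem_bot] at h4
    exact Prod.ext (Subtype.ext h4) (Subtype.ext h3)
  have hsurj : Function.Surjective e₀ := by
    intro y
    have hy : y ∈ LinearMap.range (trivL p l) ⊔ W := by rw [hW.sup_eq_top]; trivial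
    obtain ⟨t, ht, w, hw, hty⟩ := Submodule.mem_sup.1 hy
    obtain ⟨X, hX⟩ := ht
    have hXm : X ∈ LinearMap.ker (trivL p l) ⊔ S := by rw [hS.sup_eq_top]; trivial
    obtain ⟨kk, hk, s, hs, hks⟩ := Submodule.mem_sup.1 hXm
    refine ⟨(⟨s, hs⟩, ⟨w, hw⟩), ?_⟩
    rw [he₀_apply]
    have hts : trivL p l s = t := by
      rw [← hX, ← hks, map_add, LinearMap.mem_ker.1 hk, zero_add]
    rw [hts]
    exact hty
  set e := LinearEquiv.ofBijective e₀ ⟨hinj, hsurj⟩ with he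
  set eC := e.toContinuousLinearEquiv with heC
  have heC_apply : ∀ z : S × W, eC z = e₀ z := fun z => rfl
  -- Θ and its strict derivative
  set Θ : S × W → Cfg P L := fun z => act p l (1 + (z.1 : M3)) + (z.2 : Cfg P L) with hΘdef
  have haff : HasStrictFDerivAt (fun z : S × W => (1 : M3) + ((z.1 : S) : M3))
      (S.subtypeL.comp (ContinuousLinearMap.fst ℝ S W)) 0 :=
    ((S.subtypeL.comp (ContinuousLinearMap.fst ℝ S W)).hasStrictFDerivAt).const_add 1
  have hact1 : HasStrictFDerivAt (act p l) (trivC p l)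
      ((1 : M3) + (((0 : S × W).1 : S) : M3)) := by
    simpa using act_hasStrictFDerivAt p l
  have hΘs : HasStrictFDerivAt Θ (eC : (S × W) →L[ℝ] Cfg P L) 0 := by
    have hcomp := hact1.comp (0 : S × W) haff
    have hadd := hcomp.add
      ((W.subtypeL.comp (ContinuousLinearMap.snd ℝ S W)).hasStrictFDerivAt)
    have heq : (eC : (S × W) →L[ℝ] Cfg P L)
        = (trivC p l).comp (S.subtypeL.comp (ContinuousLinearMap.fst ℝ S W))
          + W.subtypeL.comp (ContinuousLinearMap.snd ℝ S W) := by
      refine ContinuousLinearMap.ext fun z => ?_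
      show e₀ z = _
      rw [he₀_apply]
      rfl
    rw [hΘdef, heq]
    exact hadd
  have hΘ0 : Θ 0 = (p, l) := by
    rw [hΘdef]
    simp [act_one p l]
  set ΘP := hΘs.toOpenPartialHomeomorph Θ with hΘP
  have hcoe : ⇑ΘP = Θ := rfl
  have h0src : (0 : S × W) ∈ ΘP.source := hΘs.mem_toOpenPartialHomeomorph_source
  -- left inverse of dF on W
  have hker_le : LinearMap.ker (dF I p l) ≤ LinearMap.range (trivL p l) := by
    intro d hd
    obtain ⟨X, h1, h2⟩ := hinf d.1 d.2
      ((dF_eq_zero_iff I p l d).1 (LinearMap.mem_ker.1 hd))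
    exact ⟨X, Prod.ext (funext fun i => (h1 i).symm) (funext fun j => (h2 j).symm)⟩
  obtain ⟨π, hπ⟩ := ((dF I p l).comp W.subtype).exists_leftInverse_of_injective (by
    rw [Submodule.eq_bot_iff]
    intro w hw
    rw [LinearMap.mem_ker, LinearMap.comp_apply] at hw
    have hwr : (w : Cfg P L) ∈ LinearMap.range (trivL p l) ⊓ W :=
      ⟨hker_le (LinearMap.mem_ker.2 hw), w.2⟩
    rw [hW.inf_eq_bot, Submodule.mem_bot] at hwr
    exact Subtype.ext hwr)
  set πC := π.toContinuousLinearMap with hπCdef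
  set H : S × W → S × W := fun z => (z.1, πC (Fmap I (Θ z))) with hHdef
  have hFs : HasStrictFDerivAt (Fmap I) (dFC I p l) (Θ 0) := by
    rw [hΘ0]; exact Fmap_hasStrictFDerivAt I p l
  have hFΘ := hFs.comp 0 hΘs
  have hπs : HasStrictFDerivAt (⇑πC) πC ((Fmap I ∘ Θ) 0) :=
    @ContinuousLinearMap.hasStrictFDerivAt ℝ _ (P × L → ℝ) _ _ _ W _ _ _ πC _
  have hπF := hπs.comp 0 hFΘ
  have hfst : HasStrictFDerivAt (fun z : S × W => z.1) (ContinuousLinearMap.fst ℝ S W) 0 :=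
    @ContinuousLinearMap.hasStrictFDerivAt ℝ _ (S × W) _ _ _ S _ _ _
      (ContinuousLinearMap.fst ℝ S W) 0
  have hHs0 := hfst.prodMk hπF
  have hDid : ((ContinuousLinearMap.fst ℝ S W).prod
      (πC.comp ((dFC I p l).comp (eC : (S × W) →L[ℝ] Cfg P L))))
      = ((ContinuousLinearEquiv.refl ℝ (S × W)) : (S × W) →L[ℝ] (S × W)) := by
    refine ContinuousLinearMap.ext fun z => ?_
    refine Prod.ext rfl ?_
    show πC ((dF I p l) (e₀ z)) = z.2
    rw [he₀_apply, map_add, dF_trivL I p l hreal, zero_add]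
    have hπz := LinearMap.congr_fun hπ z.2
    simpa [hπCdef, LinearMap.coe_toContinuousLinearMap'] using hπz
  have hHs : HasStrictFDerivAt H
      ((ContinuousLinearEquiv.refl ℝ (S × W)) : (S × W) →L[ℝ] (S × W)) 0 := by
    rw [hHdef, ← hDid]
    exact hHs0
  set HP := hHs.toOpenPartialHomeomorph H with hHP
  have hcoeH : ⇑HP = H := rfl
  have h0srcH : (0 : S × W) ∈ HP.source := hHs.mem_toOpenPartialHomeomorph_source
  -- good set near 0
  have hcont1 : ContinuousAt (fun X : S => (1 : M3) + (X : M3)) 0 :=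
    (continuous_const.add continuous_subtype_val).continuousAt
  have hvalue : (fun X : S => (1 : M3) + (X : M3)) 0 = 1 := by simp
  have hU1 : ∀ᶠ X : S in 𝓝 0, IsUnit ((1 : M3) + (X : M3)) := by
    exact hcont1.preimage_mem_nhds (t := {g : M3 | IsUnit g})
      (by simpa using Units.isOpen.mem_nhds isUnit_one)
  have hU2 : ∀ᶠ X : S in 𝓝 0, ∀ i, (((1 : M3) + (X : M3)) *ᵥ hat (p i)) 2 ≠ 0 := by
    rw [eventually_all]
    intro i
    have hc : ContinuousAt (fun X : S => ((((1 : M3) + (X : M3))) *ᵥ hat (p i)) 2) 0 :=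
      ((mvC (hat (p i)) 2).continuous.continuousAt).comp hcont1
    exact hc.preimage_mem_nhds (t := {x : ℝ | x ≠ 0})
      (by simpa [Matrix.one_mulVec] using isOpen_ne.mem_nhds one_ne_zero)
  have hRinvc : ContinuousAt (Ring.inverse : M3 → M3) 1 := by
    have h := (contDiffAt_ringInverse ℝ (n := 1) (1 : M3ˣ)).continuousAt
    simpa using h
  have hU3 : ∀ᶠ X : S in 𝓝 0,
      ∀ j, ((Ring.inverse ((1 : M3) + (X : M3)))ᵀ *ᵥ hat (l j)) 2 ≠ 0 := by
    rw [eventually_all]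
    intro j
    have hc2 : ContinuousAt (fun g : M3 => ((Ring.inverse g)ᵀ *ᵥ hat (l j)) 2)
        ((fun X : S => (1 : M3) + (X : M3)) 0) := by
      rw [hvalue]
      exact ((tmvC (hat (l j)) 2).continuous.continuousAt).comp hRinvc
    have hc : ContinuousAt
        (fun X : S => ((Ring.inverse ((1 : M3) + (X : M3)))ᵀ *ᵥ hat (l j)) 2) 0 :=
      ContinuousAt.comp (g := fun g : M3 => ((Ring.inverse g)ᵀ *ᵥ hat (l j)) 2)
        (f := fun X : S => (1 : M3) + (X : M3)) hc2 hcont1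
    exact hc.preimage_mem_nhds (t := {x : ℝ | x ≠ 0})
      (by simpa [Matrix.one_mulVec] using isOpen_ne.mem_nhds one_ne_zero)
  have hGood := (hU1.and hU2).and hU3
  -- choose a product neighborhood
  have hGz : {z : S × W | (IsUnit ((1 : M3) + ((z.1 : S) : M3)) ∧
      ∀ i, (((1 : M3) + ((z.1 : S) : M3)) *ᵥ hat (p i)) 2 ≠ 0) ∧
      ∀ j, ((Ring.inverse ((1 : M3) + ((z.1 : S) : M3)))ᵀ *ᵥ hat (l j)) 2 ≠ 0}
      ∈ 𝓝 (0 : S × W) := by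
    have ht : Filter.Tendsto (Prod.fst : S × W → S) (𝓝 0) (𝓝 0) :=
      continuous_fst.tendsto (0 : S × W)
    exact ht.eventually hGood
  have hsrc1 : ΘP.source ∈ 𝓝 (0 : S × W) := ΘP.open_source.mem_nhds h0src
  have hsrc2 : HP.source ∈ 𝓝 (0 : S × W) := HP.open_source.mem_nhds h0srcH
  obtain ⟨V₁, hV₁, V₂, hV₂, hVsub⟩ :=
    mem_nhds_prod_iff.1 (inter_mem hGz (inter_mem hsrc1 hsrc2))
  -- the desired neighborhood
  have hΘP0 : ΘP 0 = (p, l) := by rw [hcoe, hΘ0]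
  have hplt : (p, l) ∈ ΘP.target := by
    rw [← hΘP0]
    exact ΘP.map_source h0src
  have hsymm0 : ΘP.symm (p, l) = 0 := by
    rw [← hΘP0]
    exact ΘP.left_inv h0src
  refine ⟨ΘP.target ∩ ΘP.symm ⁻¹' (V₁ ×ˢ V₂), ?_, ?_⟩
  · refine inter_mem (ΘP.open_target.mem_nhds hplt) ?_
    have hca : ContinuousAt ΘP.symm (p, l) :=
      (ΘP.symm.continuousAt (by rwa [OpenPartialHomeomorph.symm_source]))
    refine hca.preimage_mem_nhds ?_
    rw [hsymm0]
    exact prod_mem_nhds hV₁ hV₂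
  · rintro q ⟨hqt, hqV⟩ hqreal
    set z := ΘP.symm q with hzdef
    have hzsrc : z ∈ ΘP.source := ΘP.map_target hqt
    have hΘz : Θ z = q := by
      have h := ΘP.right_inv hqt
      rwa [hcoe] at h
    have hzV : z ∈ V₁ ×ˢ V₂ := hqV
    have hzV' := hVsub hzV
    obtain ⟨⟨hunit, hdp2⟩, hdl2⟩ := hzV'.1
    have hzH : z ∈ HP.source := hzV'.2.2
    have h0V₂ : (0 : W) ∈ V₂ := mem_of_mem_nhds hV₂
    have hz'V : ((z.1, (0 : W)) : S × W) ∈ V₁ ×ˢ V₂ := ⟨hzV.1, h0V₂⟩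
    have hz'H : ((z.1, (0 : W)) : S × W) ∈ HP.source := (hVsub hz'V).2.2
    have hFq : Fmap I q = 0 := Fmap_eq_zero I q hqreal
    have hΘz' : Θ ((z.1, (0 : W)) : S × W) = act p l (1 + ((z.1 : S) : M3)) := by
      rw [hΘdef]
      simp
    have hreal' : IsAffRealization I (act p l (1 + ((z.1 : S) : M3))).1
        (act p l (1 + ((z.1 : S) : M3))).2 :=
      act_isReal I p l hreal _ hunit hdp2 hdl2
    have hHz : H z = (z.1, 0) := by
      rw [hHdef]
      show (z.1, πC (Fmap I (Θ z))) = (z.1, 0)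
      rw [hΘz, hFq, map_zero]
    have hHz' : H ((z.1, (0 : W)) : S × W) = (z.1, 0) := by
      rw [hHdef]
      show (z.1, πC (Fmap I (Θ (z.1, (0 : W))))) = (z.1, 0)
      rw [hΘz', Fmap_eq_zero I _ hreal', map_zero]
    have hzz : z = ((z.1, (0 : W)) : S × W) := by
      refine HP.injOn hzH hz'H ?_
      rw [hcoeH, hHz, hHz']
    have hqact : q = act p l (1 + ((z.1 : S) : M3)) := by
      rw [← hΘz, hzz, hΘz']
    -- build the projective equivalence
    refine ⟨hunit.unit,
      fun i => ((((1 : M3) + ((z.1 : S) : M3)) *ᵥ hat (p i)) 2)⁻¹,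
      fun j => (((Ring.inverse ((1 : M3) + ((z.1 : S) : M3)))ᵀ *ᵥ hat (l j)) 2)⁻¹,
      fun i => inv_ne_zero (hdp2 i), fun j => inv_ne_zero (hdl2 j),
      fun i => ?_, fun j => ?_⟩
    · simp only [hqact, hunit.unit_spec]
      funext k
      refine Fin.lastCases ?_ (fun k' => ?_) k
      · show (1 : ℝ) = _
        simp only [Pi.smul_apply, smul_eq_mul]
        rw [show (Fin.last 2) = (2 : Fin 3) from rfl]
        exact (inv_mul_cancel₀ (hdp2 i)).symm
      · simp [act, ptAct, Fin.init]
    · have hAinv : ((hunit.unit⁻¹ : M3ˣ) : M3) = Ring.inverse (1 + ((z.1 : S) : M3)) := by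
        have h1 := Ring.inverse_unit hunit.unit
        rw [hunit.unit_spec] at h1
        exact h1.symm
      simp only [hqact, hAinv]
      funext k
      refine Fin.lastCases ?_ (fun k' => ?_) k
      · show (1 : ℝ) = _
        simp only [Pi.smul_apply, smul_eq_mul]
        rw [show (Fin.last 2) = (2 : Fin 3) from rfl]
        exact (inv_mul_cancel₀ (hdl2 j)).symm
      · simp [act, lnAct, Fin.init]

end Main
end

section
/- If an affine realization (p, l) of an incidence geometry (P, L, I) is projectively infinitesimally rigid, i.e., every infinitesimal motion of (p, l) is trivial, then |I| ≥ 2|P| + 2|L| − 8. -/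
open Matrix

/-- Theorem: if an affine realization `(p, l)` of `(P, L, I)` is projectively
infinitesimally rigid (every infinitesimal motion is trivial), then
`|I| ≥ 2|P| + 2|L| − 8`. -/
theorem infRigid_count
    {P L : Type*} [Fintype P] [Fintype L] (I : Set (P × L))
    (p : P → Fin 2 → ℝ) (l : L → Fin 2 → ℝ)
    (hreal : IsAffRealization I p l)
    (hinf : ∀ dp dl, IsInfMotion I p l dp dl → IsTrivMotion p l dp dl) :
    2 * (Fintype.card P : ℤ) + 2 * (Fintype.card L : ℤ) - 8 ≤ (I.ncard : ℤ) := by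
  classical
  haveI : Fintype I := I.toFinite.fintype
  let f : ((P → Fin 2 → ℝ) × (L → Fin 2 → ℝ)) →ₗ[ℝ] (I → ℝ) :=
    { toFun := fun v ij => p ij.1.1 ⬝ᵥ v.2 ij.1.2 + l ij.1.2 ⬝ᵥ v.1 ij.1.1
      map_add' := by
        intro a b
        funext ij
        simp [dotProduct, Prod.fst_add, Prod.snd_add]
        ring
      map_smul' := by
        intro c a
        funext ij
        simp [dotProduct, Prod.smul_fst, Prod.smul_snd, smul_eq_mul]
        ring }
  let g : Matrix (Fin 3) (Fin 3) ℝ →ₗ[ℝ] ((P → Fin 2 → ℝ) × (L → Fin 2 → ℝ)) :=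
    { toFun := fun X =>
        (fun i => Fin.init (X *ᵥ hat (p i)) - (X *ᵥ hat (p i)) 2 • p i,
         fun j => -(Fin.init (Xᵀ *ᵥ hat (l j))) + (Xᵀ *ᵥ hat (l j)) 2 • l j)
      map_add' := by
        intro A B
        refine Prod.ext ?_ ?_ <;> funext x k <;>
          simp [Matrix.add_mulVec, Matrix.transpose_add, Fin.init, mulVec, dotProduct,
            Fin.sum_univ_three] <;> ring
      map_smul' := by
        intro c A
        refine Prod.ext ?_ ?_ <;> funext x k <;>
          simp [Matrix.smul_mulVec, Fin.init, mulVec, dotProduct, Fin.sum_univ_three] <;> ring }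
  have hker : LinearMap.ker f ≤ LinearMap.range g := by
    rintro ⟨dp, dl⟩ hv
    have hm : IsInfMotion I p l dp dl := by
      intro ij hij
      have h0 := congrFun (LinearMap.mem_ker.mp hv) ⟨ij, hij⟩
      simpa [f, dotProduct] using h0
    obtain ⟨X, hX1, hX2⟩ := hinf dp dl hm
    exact ⟨X, Prod.ext (funext fun i => (hX1 i).symm) (funext fun j => (hX2 j).symm)⟩
  have hg1 : (1 : Matrix (Fin 3) (Fin 3) ℝ) ∈ LinearMap.ker g := by
    rw [LinearMap.mem_ker]
    refine Prod.ext ?_ ?_ <;> funext x <;>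
      simp [g, Matrix.one_mulVec, hat, Fin.init_snoc,
        show (2 : Fin 3) = Fin.last 2 from rfl, Fin.snoc_last] <;>
      simp [Fin.snoc]
  have hkerg : 1 ≤ Module.finrank ℝ (LinearMap.ker g) :=
    Module.finrank_pos_iff_exists_ne_zero.mpr
      ⟨⟨1, hg1⟩, fun h => by
        have h2 := congrArg Subtype.val h
        simp only [Submodule.coe_zero] at h2
        exact one_ne_zero h2⟩
  have hrn_f := LinearMap.finrank_range_add_finrank_ker f
  have hrn_g := LinearMap.finrank_range_add_finrank_ker g
  have hVdim : Module.finrank ℝ ((P → Fin 2 → ℝ) × (L → Fin 2 → ℝ))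
      = 2 * Fintype.card P + 2 * Fintype.card L := by
    rw [Module.finrank_prod]
    simp [Module.finrank_pi_fintype, Module.finrank_pi, mul_comm]
  have hMdim : Module.finrank ℝ (Matrix (Fin 3) (Fin 3) ℝ) = 9 := by
    simp [Module.finrank_matrix]
  have hrange_f : Module.finrank ℝ (LinearMap.range f) ≤ I.ncard := by
    have := Submodule.finrank_le (LinearMap.range f)
    rwa [Module.finrank_pi, ← Nat.card_eq_fintype_card, Nat.card_coe_set_eq] at this
  have hker_f : Module.finrank ℝ (LinearMap.ker f) ≤ 8 := by
    have h1 : Module.finrank ℝ (LinearMap.ker f)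
        ≤ Module.finrank ℝ (LinearMap.range g) := Submodule.finrank_mono hker
    omega
  have : 2 * Fintype.card P + 2 * Fintype.card L ≤ I.ncard + 8 := by omega

  omega
end

section
/- Let (p, l) be an affine realization of an incidence geometry (P, L, I) and let ω : P × L → ℝ satisfy ω(i, j) = 0 whenever (i, j) ∉ I. Then ω is a row dependence of the projective rigidity matrix, i.e., ∑_{j ∈ L} ω(i, j) · l(j) = 0 in ℝ² for every i ∈ P and ∑_{i ∈ P} ω(i, j) · p(i) = 0 in ℝ² for every j ∈ L, if and only if ω is an equilibrium stress of the homogenized realization, i.e., ∑_{j ∈ L} ω(i, j) · l̂(j) = 0 in ℝ³ for every i ∈ P and ∑_{i ∈ P} ω(i, j) · p̂(i) = 0 in ℝ³ for every j ∈ L. In particular, any such ω is purely combinatorial: ∑_{j ∈ L} ω(i, j) = 0 for every i ∈ P and ∑_{i ∈ P} ω(i, j) = 0 for every j ∈ L. -/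
open Matrix

/-- Theorem: let `(p, l)` be an affine realization of `(P, L, I)` and `ω` scalars on
`P × L` vanishing off `I`. Then `ω` is a row dependence of the projective rigidity
matrix (the ℝ²-valued equilibrium equations hold) if and only if `ω` is an
equilibrium stress of the homogenized realization (the ℝ³-valued equilibrium
equations hold). In particular, any such `ω` is purely combinatorial:
`∑_j ω(i, j) = 0` for every point `i` and `∑_i ω(i, j) = 0` for every line `j`. -/
theorem rowDependence_iff_eqStress
    {P L : Type*} [Fintype P] [Fintype L] (I : Set (P × L))
    (p : P → Fin 2 → ℝ) (l : L → Fin 2 → ℝ)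
    (hreal : IsAffRealization I p l)
    (ω : P × L → ℝ) (hω : ∀ ij, ij ∉ I → ω ij = 0) :
    (((∀ i, ∑ j, ω (i, j) • l j = 0) ∧ (∀ j, ∑ i, ω (i, j) • p i = 0)) ↔
      ((∀ i, ∑ j, ω (i, j) • hat (l j) = 0) ∧ (∀ j, ∑ i, ω (i, j) • hat (p i) = 0))) ∧
    (((∀ i, ∑ j, ω (i, j) • l j = 0) ∧ (∀ j, ∑ i, ω (i, j) • p i = 0)) →
      ((∀ i, ∑ j, ω (i, j) = 0) ∧ (∀ j, ∑ i, ω (i, j) = 0))) := by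
  -- key: terms with ω ≠ 0 have dot product -1
  have hterm : ∀ i j, ω (i, j) * (l j ⬝ᵥ p i) = -ω (i, j) := by
    intro i j
    by_cases h : (i, j) ∈ I
    · have := hreal (i, j) h
      have : l j ⬝ᵥ p i = -1 := by linarith
      rw [this]; ring
    · rw [hω _ h]; ring
  have hs1 : ∀ i, (∑ j, ω (i, j) • l j = 0) → ∑ j, ω (i, j) = 0 := by
    intro i h
    have h0 : ∑ j, ω (i, j) * (l j ⬝ᵥ p i) = 0 := by
      calc ∑ j, ω (i, j) * (l j ⬝ᵥ p i) = (∑ j, ω (i, j) • l j) ⬝ᵥ p i := by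
            simp only [dotProduct, Finset.sum_apply, Pi.smul_apply, smul_eq_mul,
              Finset.mul_sum, Finset.sum_mul, mul_assoc]
            rw [Finset.sum_comm]
        _ = 0 := by rw [h]; simp
    simp only [hterm, Finset.sum_neg_distrib] at h0
    linarith
  have hs2 : ∀ j, (∑ i, ω (i, j) • p i = 0) → ∑ i, ω (i, j) = 0 := by
    intro j h
    have h0 : ∑ i, ω (i, j) * (l j ⬝ᵥ p i) = 0 := by
      calc ∑ i, ω (i, j) * (l j ⬝ᵥ p i) = l j ⬝ᵥ (∑ i, ω (i, j) • p i) := by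
            simp only [dotProduct, Finset.sum_apply, Pi.smul_apply, smul_eq_mul,
              Finset.mul_sum]
            rw [Finset.sum_comm]
            congr 1; funext i; congr 1; funext m; ring
        _ = 0 := by rw [h]; simp
    simp only [hterm, Finset.sum_neg_distrib] at h0
    linarith
  constructor
  · constructor
    · rintro ⟨h1, h2⟩
      constructor
      · intro i
        funext k
        have hc := fun m : Fin 2 => congrFun (h1 i) m
        simp only [Finset.sum_apply, Pi.smul_apply, Pi.zero_apply, smul_eq_mul] at hc
        fin_cases k <;>
          simp only [Finset.sum_apply, Pi.smul_apply, Pi.zero_apply, smul_eq_mul, hat] <;>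
          [exact (by simpa using hc 0); exact (by simpa [Fin.snoc] using hc 1);
            (simp only [Fin.snoc]; simpa using hs1 i (h1 i))]
      · intro j
        funext k
        have hc := fun m : Fin 2 => congrFun (h2 j) m
        simp only [Finset.sum_apply, Pi.smul_apply, Pi.zero_apply, smul_eq_mul] at hc
        fin_cases k <;>
          simp only [Finset.sum_apply, Pi.smul_apply, Pi.zero_apply, smul_eq_mul, hat] <;>
          [exact (by simpa using hc 0); exact (by simpa [Fin.snoc] using hc 1);
            (simp only [Fin.snoc]; simpa using hs2 j (h2 j))]
    · rintro ⟨h1, h2⟩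
      constructor
      · intro i
        funext k
        have hc := congrFun (h1 i) k.castSucc
        simp only [Finset.sum_apply, Pi.smul_apply, Pi.zero_apply, smul_eq_mul, hat,
          Fin.snoc_castSucc] at hc ⊢
        exact hc
      · intro j
        funext k
        have hc := congrFun (h2 j) k.castSucc
        simp only [Finset.sum_apply, Pi.smul_apply, Pi.zero_apply, smul_eq_mul, hat,
          Fin.snoc_castSucc] at hc ⊢
        exact hc
  · rintro ⟨h1, h2⟩
    exact ⟨fun i => hs1 i (h1 i), fun j => hs2 j (h2 j)⟩
end

section
/- Let (p, l) be an affine realization of an incidence geometry (P, L, I) possessing four points i₁, i₂, i₃, i₄ ∈ P such that any three of the homogenizations p̂(i₁), p̂(i₂), p̂(i₃), p̂(i₄) are linearly independent. If the |I| linear functionals on (ℝ²)^P × (ℝ²)^L given by (ṗ, l̇) ↦ p(i) ⬝ l̇(j) + l(j) ⬝ ṗ(i) for (i, j) ∈ I are linearly independent (i.e., the rows of the projective rigidity matrix are linearly independent), then |I| ≤ 2|P| + 2|L| − 8. -/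
open Matrix

/-- The row of the projective rigidity matrix corresponding to an incidence `(i, j)`,
viewed as the linear functional `(ṗ, l̇) ↦ p i ⬝ l̇ j + l j ⬝ ṗ i`
on `(ℝ²)^P × (ℝ²)^L`. -/
def rigidityRow {P L : Type*} [Fintype P] [Fintype L]
    (p : P → Fin 2 → ℝ) (l : L → Fin 2 → ℝ) (ij : P × L) :
    ((P → Fin 2 → ℝ) × (L → Fin 2 → ℝ)) → ℝ :=
  fun m => p ij.1 ⬝ᵥ m.2 ij.2 + l ij.2 ⬝ᵥ m.1 ij.1

section aux
variable {P L : Type*} [Fintype P] [Fintype L]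

/-- infinitesimal projective motion induced by a 3×3 matrix -/
noncomputable def motionMap (p : P → Fin 2 → ℝ) (l : L → Fin 2 → ℝ) :
    Matrix (Fin 3) (Fin 3) ℝ →ₗ[ℝ] ((P → Fin 2 → ℝ) × (L → Fin 2 → ℝ)) where
  toFun A :=
    (fun i k => (A *ᵥ hat (p i)) k.castSucc - (A *ᵥ hat (p i)) (Fin.last 2) * p i k,
     fun j k => (Aᵀ *ᵥ hat (l j)) (Fin.last 2) * l j k - (Aᵀ *ᵥ hat (l j)) k.castSucc)
  map_add' A B := by
    refine Prod.ext ?_ ?_ <;> funext a k <;>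
      simp [Matrix.add_mulVec, Matrix.transpose_add] <;> ring
  map_smul' c A := by
    refine Prod.ext ?_ ?_ <;> funext a k <;>
      simp [Matrix.smul_mulVec, Matrix.transpose_smul] <;> ring

lemma hat_dot_s8 (v : Fin 2 → ℝ) (w : Fin 3 → ℝ) :
    hat v ⬝ᵥ w = v ⬝ᵥ (fun k => w k.castSucc) + w (Fin.last 2) := by
  simp [dotProduct, Fin.sum_univ_castSucc, hat, show ∀ v : Fin 2 → ℝ, Fin.snoc (α := fun _ => ℝ) v 1 2 = 1 from fun v => Fin.snoc_last _ _]

end aux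
section aux2
variable {P L : Type*} [Fintype P] [Fintype L]

def rowL (p : P → Fin 2 → ℝ) (l : L → Fin 2 → ℝ) (ij : P × L) :
    ((P → Fin 2 → ℝ) × (L → Fin 2 → ℝ)) →ₗ[ℝ] ℝ where
  toFun := rigidityRow p l ij
  map_add' m n := by simp [rigidityRow, dotProduct_add]; ring
  map_smul' c m := by simp [rigidityRow, dotProduct_smul]; ring

lemma row_motion (p : P → Fin 2 → ℝ) (l : L → Fin 2 → ℝ) (ij : P × L)
    (h : l ij.2 ⬝ᵥ p ij.1 + 1 = 0) (A : Matrix (Fin 3) (Fin 3) ℝ) :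
    rowL p l ij (motionMap p l A) = 0 := by
  obtain ⟨i, j⟩ := ij
  have h3 : hat (l j) ⬝ᵥ (A *ᵥ hat (p i)) = hat (p i) ⬝ᵥ (Aᵀ *ᵥ hat (l j)) := by
    simp only [dotProduct, mulVec, Matrix.transpose_apply, dotProduct, Finset.mul_sum]
    rw [Finset.sum_comm]
    congr 1; funext m; congr 1; funext k; ring
  have h1 := hat_dot_s8 (l j) (A *ᵥ hat (p i))
  have h2 := hat_dot_s8 (p i) (Aᵀ *ᵥ hat (l j))
  have hpl : p i ⬝ᵥ l j = -1 := by rw [dotProduct_comm]; linarith [h]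
  have hlp : l j ⬝ᵥ p i = -1 := by linarith [h]
  show p i ⬝ᵥ _ + l j ⬝ᵥ _ = 0
  have e1 : (fun k => (Aᵀ *ᵥ hat (l j)) (Fin.last 2) * l j k - (Aᵀ *ᵥ hat (l j)) k.castSucc)
      = (Aᵀ *ᵥ hat (l j)) (Fin.last 2) • l j - (fun k => (Aᵀ *ᵥ hat (l j)) k.castSucc) := by
    funext k; simp [mul_comm]
  have e2 : (fun k => (A *ᵥ hat (p i)) k.castSucc - (A *ᵥ hat (p i)) (Fin.last 2) * p i k)
      = (fun k => (A *ᵥ hat (p i)) k.castSucc) - (A *ᵥ hat (p i)) (Fin.last 2) • p i := by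
    funext k; simp [mul_comm]
  rw [show motionMap p l A = _ from rfl]
  simp only [motionMap, LinearMap.coe_mk, AddHom.coe_mk]
  rw [e1, e2, dotProduct_sub, dotProduct_sub, dotProduct_smul, dotProduct_smul]
  simp only [smul_eq_mul]
  rw [hpl, hlp] at *
  nlinarith [h1, h2, h3]

end aux2
section aux3
variable {P L : Type*} [Fintype P] [Fintype L]

lemma eigen_of_motion_zero (p : P → Fin 2 → ℝ) (l : L → Fin 2 → ℝ)
    (A : Matrix (Fin 3) (Fin 3) ℝ) (h : motionMap p l A = 0) (i : P) :
    A *ᵥ hat (p i) = (A *ᵥ hat (p i)) (Fin.last 2) • hat (p i) := by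
  have h1 := congrFun (congrFun (congrArg Prod.fst h) i)
  funext k
  refine Fin.lastCases ?_ (fun k => ?_) k
  · simp [hat, show ∀ v : Fin 2 → ℝ, Fin.snoc (α := fun _ => ℝ) v 1 2 = 1 from fun v => Fin.snoc_last _ _]
  · have := h1 k
    simp only [motionMap, LinearMap.coe_mk, AddHom.coe_mk, Prod.fst] at this
    simp only [Pi.smul_apply, smul_eq_mul, hat, Fin.snoc_castSucc]
    simp only [Prod.fst_zero, Pi.zero_apply, hat] at this
    linarith [this]

lemma motion_one (p : P → Fin 2 → ℝ) (l : L → Fin 2 → ℝ) :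
    motionMap p l (1 : Matrix (Fin 3) (Fin 3) ℝ) = 0 := by
  refine Prod.ext ?_ ?_ <;> funext a k <;>
    simp [motionMap, Matrix.one_mulVec, Matrix.transpose_one, hat, show ∀ v : Fin 2 → ℝ, Fin.snoc (α := fun _ => ℝ) v 1 2 = 1 from fun v => Fin.snoc_last _ _]

end aux3
lemma eq_smul_one_of_four (x : Fin 4 → (Fin 3 → ℝ))
    (hfour : ∀ k₁ k₂ k₃ : Fin 4, k₁ ≠ k₂ → k₁ ≠ k₃ → k₂ ≠ k₃ →
      LinearIndependent ℝ ![x k₁, x k₂, x k₃])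
    (A : Matrix (Fin 3) (Fin 3) ℝ) (c : Fin 4 → ℝ)
    (heig : ∀ k, A *ᵥ x k = c k • x k) : ∃ t : ℝ, A = t • 1 := by
  have h012 : LinearIndependent ℝ ![x 0, x 1, x 2] := hfour 0 1 2 (by decide) (by decide) (by decide)
  have hcard : Fintype.card (Fin 3) = Module.finrank ℝ (Fin 3 → ℝ) := by simp
  set B := basisOfLinearIndependentOfCardEqFinrank h012 hcard with hB
  have coeB : ⇑B = ![x 0, x 1, x 2] := coe_basisOfLinearIndependentOfCardEqFinrank h012 hcard
  set a := fun m => B.repr (x 3) m with ha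
  have hx3 : x 3 = a 0 • x 0 + a 1 • x 1 + a 2 • x 2 := by
    have h := B.sum_repr (x 3)
    rw [Fin.sum_univ_three] at h
    rw [← h]
    simp [coeB, ha]
  have ha0 : a 0 ≠ 0 := by
    intro h0
    have h123 := hfour 1 2 3 (by decide) (by decide) (by decide)
    have := Fintype.linearIndependent_iff.mp h123 ![a 1, a 2, -1] ?_ 2
    · norm_num [Matrix.cons_val_two, Matrix.tail_cons, Matrix.head_cons] at this
    · rw [Fin.sum_univ_three]
      simp only [Matrix.cons_val_zero, Matrix.cons_val_one, Matrix.head_cons,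
        Matrix.cons_val_two, Matrix.tail_cons]
      rw [hx3, h0]
      module
  have ha1 : a 1 ≠ 0 := by
    intro h0
    have h123 := hfour 0 2 3 (by decide) (by decide) (by decide)
    have := Fintype.linearIndependent_iff.mp h123 ![a 0, a 2, -1] ?_ 2
    · norm_num [Matrix.cons_val_two, Matrix.tail_cons, Matrix.head_cons] at this
    · rw [Fin.sum_univ_three]
      simp only [Matrix.cons_val_zero, Matrix.cons_val_one, Matrix.head_cons,
        Matrix.cons_val_two, Matrix.tail_cons]
      rw [hx3, h0]
      module
  have ha2 : a 2 ≠ 0 := by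
    intro h0
    have h123 := hfour 0 1 3 (by decide) (by decide) (by decide)
    have := Fintype.linearIndependent_iff.mp h123 ![a 0, a 1, -1] ?_ 2
    · norm_num [Matrix.cons_val_two, Matrix.tail_cons, Matrix.head_cons] at this
    · rw [Fin.sum_univ_three]
      simp only [Matrix.cons_val_zero, Matrix.cons_val_one, Matrix.head_cons,
        Matrix.cons_val_two, Matrix.tail_cons]
      rw [hx3, h0]
      module
  -- eigenvalues all equal
  have key : ∀ m : Fin 3, ![a 0 * (c 0 - c 3), a 1 * (c 1 - c 3), a 2 * (c 2 - c 3)] m = 0 := by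
    apply Fintype.linearIndependent_iff.mp h012
    rw [Fin.sum_univ_three]
    simp only [Matrix.cons_val_zero, Matrix.cons_val_one, Matrix.head_cons,
      Matrix.cons_val_two, Matrix.tail_cons]
    have e1 : A *ᵥ x 3 = c 3 • x 3 := heig 3
    rw [hx3] at e1
    rw [Matrix.mulVec_add, Matrix.mulVec_add, Matrix.mulVec_smul, Matrix.mulVec_smul,
      Matrix.mulVec_smul, heig 0, heig 1, heig 2] at e1
    have e2 : a 0 • c 0 • x 0 + a 1 • c 1 • x 1 + a 2 • c 2 • x 2
        - c 3 • (a 0 • x 0 + a 1 • x 1 + a 2 • x 2) = 0 := by rw [← e1]; module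
    rw [← e2]; module
  have hc0 : c 0 = c 3 := by
    have := key 0; simp at this
    rcases this with h | h
    · exact absurd h ha0
    · linarith
  have hc1 : c 1 = c 3 := by
    have := key 1; simp at this
    rcases this with h | h
    · exact absurd h ha1
    · linarith
  have hc2 : c 2 = c 3 := by
    have := key 2; simp at this
    rcases this with h | h
    · exact absurd h ha2
    · linarith
  refine ⟨c 3, ?_⟩
  apply Matrix.toLin'.injective
  apply B.ext
  intro m
  fin_cases m <;>
    simp [coeB, Matrix.toLin'_apply, Matrix.smul_mulVec, Matrix.one_mulVec,
      heig 0, heig 1, heig 2, hc0, hc1, hc2]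


set_option maxHeartbeats 1000000 in
/-- Theorem: let `(p, l)` be an affine realization of `(P, L, I)` with four points
whose homogenizations are three-by-three linearly independent. If the rows of the
projective rigidity matrix (the `|I|` functionals `rigidityRow`) are linearly
independent, then `|I| ≤ 2|P| + 2|L| − 8`. -/
theorem indep_rows_count
    {P L : Type*} [Fintype P] [Fintype L] (I : Set (P × L))
    (p : P → Fin 2 → ℝ) (l : L → Fin 2 → ℝ)
    (hreal : IsAffRealization I p l)
    (i₁ i₂ i₃ i₄ : P)
    (hfour : ∀ k₁ k₂ k₃ : Fin 4, k₁ ≠ k₂ → k₁ ≠ k₃ → k₂ ≠ k₃ →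
      LinearIndependent ℝ
        ![![hat (p i₁), hat (p i₂), hat (p i₃), hat (p i₄)] k₁,
          ![hat (p i₁), hat (p i₂), hat (p i₃), hat (p i₄)] k₂,
          ![hat (p i₁), hat (p i₂), hat (p i₃), hat (p i₄)] k₃])
    (hindep : LinearIndependent ℝ (fun ij : I => rigidityRow p l (ij : P × L))) :
    (I.ncard : ℤ) ≤ 2 * (Fintype.card P : ℤ) + 2 * (Fintype.card L : ℤ) - 8 := by
  classical
  -- kernel of the motion map is the scalar matrices
  have hker : LinearMap.ker (motionMap p l)
      = Submodule.span ℝ {(1 : Matrix (Fin 3) (Fin 3) ℝ)} := by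
    apply le_antisymm
    · intro A hA
      rw [LinearMap.mem_ker] at hA
      have heig : ∀ k : Fin 4,
          A *ᵥ ![hat (p i₁), hat (p i₂), hat (p i₃), hat (p i₄)] k
          = (fun k => (A *ᵥ ![hat (p i₁), hat (p i₂), hat (p i₃), hat (p i₄)] k) (Fin.last 2)) k
            • ![hat (p i₁), hat (p i₂), hat (p i₃), hat (p i₄)] k := by
        intro k
        fin_cases k
        · exact eigen_of_motion_zero p l A hA i₁
        · exact eigen_of_motion_zero p l A hA i₂
        · exact eigen_of_motion_zero p l A hA i₃
        · exact eigen_of_motion_zero p l A hA i₄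
      obtain ⟨t, ht⟩ :=
        eq_smul_one_of_four ![hat (p i₁), hat (p i₂), hat (p i₃), hat (p i₄)] hfour A _ heig
      rw [Submodule.mem_span_singleton]
      exact ⟨t, ht.symm⟩
    · rw [Submodule.span_le, Set.singleton_subset_iff]
      exact motion_one p l
  have ne1 : (1 : Matrix (Fin 3) (Fin 3) ℝ) ≠ 0 := one_ne_zero
  have h9 : Module.finrank ℝ (Matrix (Fin 3) (Fin 3) ℝ) = 9 := by
    rw [Module.finrank_matrix]; simp
  have hrankW : Module.finrank ℝ (LinearMap.range (motionMap p l)) = 8 := by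
    have h1 := LinearMap.finrank_range_add_finrank_ker (motionMap p l)
    rw [hker, finrank_span_singleton ne1, h9] at h1
    omega
  have hVdim : Module.finrank ℝ ((P → Fin 2 → ℝ) × (L → Fin 2 → ℝ))
      = 2 * Fintype.card P + 2 * Fintype.card L := by
    simp [Module.finrank_prod, Module.finrank_pi_fintype, Module.finrank_pi]
    ring
  -- dimension of the annihilator
  have hannih : Module.finrank ℝ (LinearMap.range (motionMap p l)).dualAnnihilator + 8
      = 2 * Fintype.card P + 2 * Fintype.card L := by
    have e : Module.finrank ℝ
          (((P → Fin 2 → ℝ) × (L → Fin 2 → ℝ)) ⧸ LinearMap.range (motionMap p l))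
        = Module.finrank ℝ (LinearMap.range (motionMap p l)).dualAnnihilator :=
      (Subspace.quotEquivAnnihilator (LinearMap.range (motionMap p l))).finrank_eq
    have q := Submodule.finrank_quotient_add_finrank (LinearMap.range (motionMap p l))
    rw [hrankW, hVdim] at q
    omega
  -- the rows land in the annihilator
  have hmem : ∀ ij : I, rowL p l (ij : P × L) ∈
      (LinearMap.range (motionMap p l)).dualAnnihilator := by
    intro ij
    rw [Submodule.mem_dualAnnihilator]
    rintro w ⟨A, rfl⟩
    exact row_motion p l ij (hreal ij ij.2) A
  let ρ : I → Module.Dual ℝ ((P → Fin 2 → ℝ) × (L → Fin 2 → ℝ)) :=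
    fun ij => rowL p l (ij : P × L)
  let ψ : Module.Dual ℝ ((P → Fin 2 → ℝ) × (L → Fin 2 → ℝ)) →ₗ[ℝ]
      (((P → Fin 2 → ℝ) × (L → Fin 2 → ℝ)) → ℝ) :=
    { toFun := fun f => ⇑f, map_add' := fun f g => rfl, map_smul' := fun c f => rfl }
  have hρ : LinearIndependent ℝ ρ := by
    refine LinearIndependent.of_comp ψ ?_
    exact hindep
  haveI : Fintype I := Fintype.ofFinite _
  have hspan : Submodule.span ℝ (Set.range ρ)
      ≤ (LinearMap.range (motionMap p l)).dualAnnihilator := by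
    rw [Submodule.span_le]
    rintro f ⟨ij, rfl⟩
    exact hmem ij
  have hcardle : Fintype.card I
      ≤ Module.finrank ℝ (LinearMap.range (motionMap p l)).dualAnnihilator := by
    rw [← finrank_span_eq_card hρ]
    exact Submodule.finrank_mono hspan
  have hncard : I.ncard = Fintype.card I := by
    rw [← Nat.card_coe_set_eq, Nat.card_eq_fintype_card]
  have hfin : I.ncard + 8 ≤ 2 * Fintype.card P + 2 * Fintype.card L := by omega
  omega
end

section
/- Let (P, L, I) be an incidence geometry, p : P → ℝ³, l : L → ℝ³. Let Q be a symmetric orthogonal 3×3 real matrix and π : P ≃ L a bijection such that l(π(i)) = Q p(i) for all i ∈ P, and such that for all i, i' ∈ P, (i, π(i')) ∈ I if and only if (i', π(i)) ∈ I (i.e., π is an autopolarity of the configuration). Call a pair of maps m_P : P → ℝ³, m_L : L → ℝ³ polarity-symmetric if m_L(π(i)) = Q m_P(i) for all i ∈ P. Then for every polarity-symmetric pair (m_P, m_L) and all i, i' ∈ P with (i, π(i')) ∈ I, the equation ⟨p(i), m_L(π(i'))⟩ + ⟨l(π(i')), m_P(i)⟩ = 0 holds if and only if ⟨p(i'), m_L(π(i))⟩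 + ⟨l(π(i)), m_P(i')⟩ = 0 holds. Consequently, a polarity-symmetric pair satisfies the infinitesimal motion equations ⟨p(i), m_L(j)⟩ + ⟨l(j), m_P(i)⟩ = 0 for all (i, j) ∈ I if and only if it satisfies them for all incidences in any subset R ⊆ I which, for every i, i' ∈ P with (i, π(i')) ∈ I, contains (i, π(i')) or (i', π(i)). -/
open Matrix

/-- Theorem: let `(P, L, I)` be an incidence geometry with a configuration
`p : P → ℝ³`, `l : L → ℝ³`, let `Q` be a symmetric orthogonal `3 × 3` matrix and
`σ : P ≃ L` an autopolarity of the configuration (`l (σ i) = Q p i`, and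
`(i, σ i') ∈ I ↔ (i', σ i) ∈ I`). Then for every polarity-symmetric pair
`(m_P, m_L)` (i.e. `m_L (σ i) = Q m_P i`), the infinitesimal motion equation at the
incidence `(i, σ i')` holds iff it holds at `(i', σ i)`; consequently `(m_P, m_L)`
satisfies the motion equations at all incidences of `I` iff it satisfies them at all
incidences of any subset `R ⊆ I` containing, for each incidence `(i, σ i') ∈ I`,
either `(i, σ i')` or `(i', σ i)`. -/
theorem polarity_orbit_rigidity
    {P L : Type*} [Fintype P] [Fintype L]
    (I : Set (P × L)) (p : P → Fin 3 → ℝ) (l : L → Fin 3 → ℝ)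
    (Q : Matrix (Fin 3) (Fin 3) ℝ) (hQorth : Qᵀ * Q = 1) (hQsym : Qᵀ = Q)
    (σ : P ≃ L) (hpol : ∀ i : P, l (σ i) = Q *ᵥ p i)
    (hI : ∀ i i' : P, (i, σ i') ∈ I ↔ (i', σ i) ∈ I)
    (mP : P → Fin 3 → ℝ) (mL : L → Fin 3 → ℝ)
    (hm : ∀ i : P, mL (σ i) = Q *ᵥ mP i) :
    (∀ i i' : P, (i, σ i') ∈ I →
      (p i ⬝ᵥ mL (σ i') + l (σ i') ⬝ᵥ mP i = 0 ↔
        p i' ⬝ᵥ mL (σ i) + l (σ i) ⬝ᵥ mP i' = 0)) ∧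
    (∀ R ⊆ I, (∀ i i' : P, (i, σ i') ∈ I → (i, σ i') ∈ R ∨ (i', σ i) ∈ R) →
      ((∀ ij ∈ I, p ij.1 ⬝ᵥ mL ij.2 + l ij.2 ⬝ᵥ mP ij.1 = 0) ↔
        (∀ ij ∈ R, p ij.1 ⬝ᵥ mL ij.2 + l ij.2 ⬝ᵥ mP ij.1 = 0))) := by
  have key : ∀ i i' : P, p i ⬝ᵥ mL (σ i') + l (σ i') ⬝ᵥ mP i =
      p i' ⬝ᵥ mL (σ i) + l (σ i) ⬝ᵥ mP i' := by
    intro i i'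
    rw [hpol, hpol, hm, hm, dotProduct_mulVec, dotProduct_mulVec,
      ← vecMul_transpose, ← vecMul_transpose, hQsym]
    ring
  refine ⟨fun i i' _ => by rw [key i i'], fun R hRI hR => ?_⟩
  refine ⟨fun h ij hij => h ij (hRI hij), fun h ij hij => ?_⟩
  obtain ⟨i, j⟩ := ij
  have hij' : (i, σ (σ.symm j)) ∈ I := by simpa using hij
  rcases hR i (σ.symm j) hij' with hr | hr
  · have := h _ hr
    simpa using this
  · have := h _ hr
    simp only at this
    have := (key i (σ.symm j)).trans this
    simpa using this
end
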